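/- Let G be a λ-dense bipartite graph on parts of size n (all degrees exceeding (1/2 + λ)n with λ ∈ (0, 1/2)), and suppose G has at least one perfect matching. For an edge e of G, let P_e be the probability that e is contained in a uniformly random perfect matching of G. Then P_e ≤ 1/(λn). -/

import Mathlib

open Finset Equiv

/-- Upper bound on matching marginals in λ-dense bipartite graphs: the probability that a
fixed edge `(x,y)` lies in a uniformly random perfect matching is at most `1/(λn)`. -/
theorem dense_bipartite_matching_marginal_upper
    (n : ℕ) (lam : ℝ) (hlam : 0 < lam) (hlam' : lam < 1 / 2)
    (A : Fin n → Fin n → Prop)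
    (hrow : ∀ x : Fin n, ((1 / 2 + lam) * n : ℝ) < Nat.card {y : Fin n // A x y})
    (hcol : ∀ y : Fin n, ((1 / 2 + lam) * n : ℝ) < Nat.card {x : Fin n // A x y})
    (hPM : Nonempty {M : Equiv.Perm (Fin n) // ∀ i, A i (M i)})
    (x y : Fin n) (hxy : A x y) :
    (Nat.card {M : Equiv.Perm (Fin n) // (∀ i, A i (M i)) ∧ M x = y} : ℝ) /
        Nat.card {M : Equiv.Perm (Fin n) // ∀ i, A i (M i)}
      ≤ 1 / (lam * n) := by
  classical
  have hn : 0 < n := x.pos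
  have hln : (0:ℝ) < lam * n := mul_pos hlam (by exact_mod_cast hn)
  set P : Finset (Perm (Fin n)) := univ.filter (fun M => ∀ i, A i (M i)) with hPdef
  set E : Finset (Perm (Fin n)) :=
    univ.filter (fun M => (∀ i, A i (M i)) ∧ M x = y) with hEdef
  have hT : Nat.card {M : Perm (Fin n) // ∀ i, A i (M i)} = P.card := by
    simp [hPdef, Nat.card_eq_fintype_card, Fintype.card_subtype]
  have hEc : Nat.card {M : Perm (Fin n) // (∀ i, A i (M i)) ∧ M x = y} = E.card := by
    simp [hEdef, Nat.card_eq_fintype_card, Fintype.card_subtype]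
  have hPpos : 0 < P.card := by
    obtain ⟨⟨M, hM⟩⟩ := hPM
    exact card_pos.2 ⟨M, by simp [hPdef, hM]⟩
  set S : Perm (Fin n) → Finset (Fin n) :=
    fun M => univ.filter (fun y' => A x y' ∧ A (M⁻¹ y') y) with hSdef
  have hS : ∀ M : Perm (Fin n), (lam * n : ℝ) ≤ (S M).card := by
    intro M
    have h1 : ((1/2 + lam) * n : ℝ) < (univ.filter (fun y' : Fin n => A x y')).card := by
      have := hrow x
      rwa [Nat.card_eq_fintype_card, Fintype.card_subtype] at this
    have h2 : ((1/2 + lam) * n : ℝ) <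
        (univ.filter (fun y' : Fin n => A (M⁻¹ y') y)).card := by
      have h := hcol y
      rw [Nat.card_eq_fintype_card, Fintype.card_subtype] at h
      have hcardeq : (univ.filter (fun y' : Fin n => A (M⁻¹ y') y)).card
          = (univ.filter (fun z : Fin n => A z y)).card := by
        apply Finset.card_bij' (fun y' _ => M⁻¹ y') (fun z _ => M z) <;>
          intros <;> simp_all
      rw [hcardeq]; exact h
    have hinter : (S M) = (univ.filter (fun y' : Fin n => A x y')) ∩
        (univ.filter (fun y' : Fin n => A (M⁻¹ y') y)) := by
      ext y'; simp [hSdef, and_assoc]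
    have hiu := Finset.card_inter_add_card_union
      (univ.filter (fun y' : Fin n => A x y'))
      (univ.filter (fun y' : Fin n => A (M⁻¹ y') y))
    have hun : ((univ.filter (fun y' : Fin n => A x y')) ∪
        (univ.filter (fun y' : Fin n => A (M⁻¹ y') y))).card ≤ n := by
      simpa using Finset.card_le_card (Finset.subset_univ
        ((univ.filter (fun y' : Fin n => A x y')) ∪
          (univ.filter (fun y' : Fin n => A (M⁻¹ y') y))))
    rw [hinter]
    have hiu' : ((univ.filter (fun y' : Fin n => A x y') ∩
        univ.filter (fun y' : Fin n => A (M⁻¹ y') y)).card : ℝ)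
        + ((univ.filter (fun y' : Fin n => A x y') ∪
        univ.filter (fun y' : Fin n => A (M⁻¹ y') y)).card : ℝ)
        = (univ.filter (fun y' : Fin n => A x y')).card
          + (univ.filter (fun y' : Fin n => A (M⁻¹ y') y)).card := by
      exact_mod_cast congrArg (Nat.cast : ℕ → ℝ) hiu
    have hun' : (((univ.filter (fun y' : Fin n => A x y')) ∪
        (univ.filter (fun y' : Fin n => A (M⁻¹ y') y))).card : ℝ) ≤ n := by
      exact_mod_cast hun
    have hexp : ((1/2 + lam) * n : ℝ) = (n:ℝ)/2 + lam * n := by ring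
    linarith [hln]
  have hinj : (E.sigma S).card ≤ P.card := by
    apply Finset.card_le_card_of_injOn (fun p => (Equiv.swap y p.2) * p.1)
    · rintro ⟨M, y'⟩ hp
      rw [Finset.mem_coe, Finset.mem_sigma] at hp
      obtain ⟨hME, hy'⟩ := hp
      rw [hEdef, mem_filter] at hME
      obtain ⟨-, hM, hMx⟩ := hME
      rw [hSdef] at hy'
      simp only [mem_filter, mem_univ, true_and] at hy'
      obtain ⟨hA1, hA2⟩ := hy'
      rw [Finset.mem_coe, hPdef, mem_filter]
      refine ⟨mem_univ _, fun i => ?_⟩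
      simp only [Perm.mul_apply]
      rcases eq_or_ne (M i) y with h | h
      · have hix : i = x := M.injective (by rw [h, hMx])
        subst hix
        rw [h, Equiv.swap_apply_left]; exact hA1
      rcases eq_or_ne (M i) y' with h' | h'
      · have hiz : i = M⁻¹ y' := by rw [← h']; simp
        rw [h', Equiv.swap_apply_right]
        exact hiz ▸ hA2
      · rw [Equiv.swap_apply_of_ne_of_ne h h']; exact hM i
    · rintro ⟨M, a⟩ hMa ⟨N, b⟩ hNb heq
      simp only [Finset.mem_coe, Finset.mem_sigma] at hMa hNb
      have hMx : M x = y := ((mem_filter.1 hMa.1).2).2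
      have hNx : N x = y := ((mem_filter.1 hNb.1).2).2
      simp only at heq
      have hab : a = b := by
        have h := congrArg (fun f : Perm (Fin n) => f x) heq
        simpa [Perm.mul_apply, hMx, hNx, Equiv.swap_apply_left] using h
      subst hab
      have hMN : M = N := mul_left_cancel heq
      subst hMN; rfl
  have hsum : (E.card : ℝ) * (lam * n) ≤ ((E.sigma S).card : ℝ) := by
    rw [Finset.card_sigma, Nat.cast_sum]
    calc (E.card : ℝ) * (lam * n) = ∑ _M ∈ E, (lam * n) := by
          rw [Finset.sum_const, nsmul_eq_mul]
      _ ≤ ∑ M ∈ E, ((S M).card : ℝ) := Finset.sum_le_sum (fun M _ => hS M)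
  rw [hT, hEc, div_le_div_iff₀ (by exact_mod_cast hPpos) hln, one_mul]
  calc (E.card : ℝ) * (lam * n) ≤ ((E.sigma S).card : ℝ) := hsum
    _ ≤ P.card := by exact_mod_cast hinj
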